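/- arXiv:2106.05900 — 2 statements merged into one kernel-verified Lean document; each statement's English description precedes it below -/
import Mathlib

section
/- For independent standard normal random variables P and Q, the probability that sgn(P - Q/√(D-1)) = sgn(Q - P/√(D-1)) equals (1/π)·(π/2 - 2·arctan(1/√(D-1))), for any real D > 2. -/
open MeasureTheory ProbabilityTheory Real
open Set Filter

lemma sign_eq_sign_iff (u v : ℝ) :
    Real.sign u = Real.sign v ↔ (0 < u ∧ 0 < v) ∨ (u < 0 ∧ v < 0) ∨ (u = 0 ∧ v = 0) := by
  constructor
  · intro h
    rcases lt_trichotomy u 0 with hu | hu | hu <;> rcases lt_trichotomy v 0 with hv | hv | hv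
    · exact Or.inr (Or.inl ⟨hu, hv⟩)
    · rw [Real.sign_of_neg hu, hv, Real.sign_zero] at h; norm_num at h
    · rw [Real.sign_of_neg hu, Real.sign_of_pos hv] at h; norm_num at h
    · rw [hu, Real.sign_zero, Real.sign_of_neg hv] at h; norm_num at h
    · exact Or.inr (Or.inr ⟨hu, hv⟩)
    · rw [hu, Real.sign_zero, Real.sign_of_pos hv] at h; norm_num at h
    · rw [Real.sign_of_pos hu, Real.sign_of_neg hv] at h; norm_num at h
    · rw [Real.sign_of_pos hu, hv, Real.sign_zero] at h; norm_num at h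
    · exact Or.inl ⟨hu, hv⟩
  · rintro (⟨hu, hv⟩ | ⟨hu, hv⟩ | ⟨hu, hv⟩)
    · rw [Real.sign_of_pos hu, Real.sign_of_pos hv]
    · rw [Real.sign_of_neg hu, Real.sign_of_neg hv]
    · rw [hu, hv]

lemma radial_integral : ∫ r in Ioi (0:ℝ), r * rexp (-r ^ 2 / 2) = 1 := by
  have hderiv : ∀ x ∈ Ici (0:ℝ),
      HasDerivAt (fun r : ℝ => -rexp (-r ^ 2 / 2)) (x * rexp (-x ^ 2 / 2)) x := by
    intro x _
    have h1 : HasDerivAt (fun r : ℝ => -r ^ 2 / 2) (-x) x := by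
      have h0 := (hasDerivAt_pow 2 x).neg.div_const 2
      refine h0.congr_deriv ?_
      push_cast
      ring
    have := h1.exp.neg
    refine this.congr_deriv ?_
    ring
  have hint : IntegrableOn (fun x : ℝ => x * rexp (-x ^ 2 / 2)) (Ioi 0) := by
    have := (integrable_mul_exp_neg_mul_sq (b := (1:ℝ)/2) (by norm_num)).integrableOn
      (s := Ioi (0:ℝ))
    convert this using 2 with x
    ring_nf
  have htend : Tendsto (fun r : ℝ => -rexp (-r ^ 2 / 2)) atTop (nhds 0) := by
    rw [show (0:ℝ) = -0 by ring]
    apply Tendsto.neg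
    apply Real.tendsto_exp_atBot.comp
    have h2 : Tendsto (fun r : ℝ => r ^ 2 / 2) atTop atTop :=
      (tendsto_pow_atTop two_ne_zero).atTop_div_const (by norm_num)
    have h3 := tendsto_neg_atBot_iff.mpr h2
    convert h3 using 2 with r
    ring
  have := integral_Ioi_of_hasDerivAt_of_tendsto' hderiv hint htend
  simpa using this

lemma wedge_iff {s : ℝ} (hs : 1 < s) {φ : ℝ} (hφ : φ ∈ Ioo (-π) π) {r : ℝ} (hr : 0 < r) :
    (0 < r * cos φ - r * sin φ / s ∧ 0 < r * sin φ - r * cos φ / s) ↔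
      φ ∈ Ioo (arctan s⁻¹) (arctan s) := by
  have hs0 : 0 < s := lt_trans one_pos hs
  have key : (0 < r * cos φ - r * sin φ / s ∧ 0 < r * sin φ - r * cos φ / s) ↔
      (sin φ < s * cos φ ∧ cos φ < s * sin φ) := by
    constructor
    · rintro ⟨h1, h2⟩
      constructor
      · have := (div_lt_iff₀ hs0).mp (by linarith : r * sin φ / s < r * cos φ)
        nlinarith
      · have := (div_lt_iff₀ hs0).mp (by linarith : r * cos φ / s < r * sin φ)
        nlinarith
    · rintro ⟨h1, h2⟩
      constructor
      · have : r * sin φ / s < r * cos φ := by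
          rw [div_lt_iff₀ hs0]; nlinarith
        linarith
      · have : r * cos φ / s < r * sin φ := by
          rw [div_lt_iff₀ hs0]; nlinarith
        linarith
  rw [key]
  constructor
  · rintro ⟨h1, h2⟩
    have hcos : 0 < cos φ := by
      by_contra hcc
      push_neg at hcc
      have e1 : s * sin φ < s * (s * cos φ) := mul_lt_mul_of_pos_left h1 hs0
      have e2 : s * (s * cos φ) ≤ cos φ := by nlinarith [mul_nonneg (by nlinarith : (0:ℝ) ≤ s * s - 1) (neg_nonneg.mpr hcc)]
      linarith
    have hsin : 0 < sin φ := by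
      by_contra h
      push_neg at h
      have : s * sin φ ≤ 0 := mul_nonpos_iff.mpr (Or.inl ⟨hs0.le, h⟩)
      linarith
    have hφ2 : -(π/2) < φ ∧ φ < π/2 := by
      by_contra hc
      push_neg at hc
      rcases le_or_gt φ (-(π/2)) with h | h
      · have : cos φ ≤ 0 := by
          have := Real.cos_nonpos_of_pi_div_two_le_of_le (x := -φ) (by linarith) (by linarith [hφ.1])
          rwa [Real.cos_neg] at this
        linarith
      · have h' := hc h
        have : cos φ ≤ 0 := Real.cos_nonpos_of_pi_div_two_le_of_le h' (by linarith [hφ.2, Real.pi_pos])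
        linarith
    have htan1 : s⁻¹ < tan φ := by
      rw [Real.tan_eq_sin_div_cos, lt_div_iff₀ hcos, inv_mul_eq_div, div_lt_iff₀ hs0]
      linarith
    have htan2 : tan φ < s := by
      rw [Real.tan_eq_sin_div_cos, div_lt_iff₀ hcos]
      linarith [mul_comm s (cos φ)]
    constructor
    · have := Real.arctan_strictMono htan1
      rwa [Real.arctan_tan hφ2.1 hφ2.2] at this
    · have := Real.arctan_strictMono htan2
      rwa [Real.arctan_tan hφ2.1 hφ2.2] at this
  · rintro ⟨h1, h2⟩
    have hθ1 : 0 < arctan s⁻¹ := by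
      rw [← Real.arctan_zero]
      exact Real.arctan_strictMono (by positivity)
    have h0 : 0 < φ := hθ1.trans h1
    have hhalf : φ < π / 2 := h2.trans (Real.arctan_lt_pi_div_two s)
    have hcos : 0 < cos φ := Real.cos_pos_of_mem_Ioo ⟨by linarith [Real.pi_pos], hhalf⟩
    have hsin : 0 < sin φ := Real.sin_pos_of_pos_of_lt_pi h0 (by linarith [Real.pi_pos])
    have htan1 : s⁻¹ < tan φ := by
      have := Real.tan_lt_tan_of_lt_of_lt_pi_div_two (Real.neg_pi_div_two_lt_arctan s⁻¹)
        hhalf h1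
      rwa [Real.tan_arctan] at this
    have htan2 : tan φ < s := by
      have := Real.tan_lt_tan_of_lt_of_lt_pi_div_two (by linarith [Real.pi_pos] : -(π/2) < φ)
        (Real.arctan_lt_pi_div_two s) h2
      rwa [Real.tan_arctan] at this
    rw [Real.tan_eq_sin_div_cos, lt_div_iff₀ hcos] at htan1
    rw [Real.tan_eq_sin_div_cos, div_lt_iff₀ hcos] at htan2
    constructor
    · nlinarith [mul_lt_mul_of_pos_left htan1 hs0, mul_inv_cancel₀ hs0.ne']
    · nlinarith [mul_lt_mul_of_pos_left htan1 hs0, mul_inv_cancel₀ hs0.ne']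

lemma gauss_prod : (gaussianReal 0 1).prod (gaussianReal 0 1) =
    (volume : Measure (ℝ × ℝ)).withDensity
      (fun p => gaussianPDF 0 1 p.1 * gaussianPDF 0 1 p.2) := by
  refine Measure.prod_eq fun s t hs ht => ?_
  rw [withDensity_apply _ (hs.prod ht), Measure.volume_eq_prod, ← Measure.prod_restrict,
    lintegral_prod_mul (measurable_gaussianPDF 0 1).aemeasurable
      (measurable_gaussianPDF 0 1).aemeasurable,
    gaussianReal_apply 0 one_ne_zero s,
    gaussianReal_apply 0 one_ne_zero t]

lemma gauss_prod_apply {T : Set (ℝ × ℝ)} (hT : MeasurableSet T) :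
    ((gaussianReal 0 1).prod (gaussianReal 0 1)) T =
      ENNReal.ofReal (∫ p in T, gaussianPDFReal 0 1 p.1 * gaussianPDFReal 0 1 p.2) := by
  rw [gauss_prod, withDensity_apply _ hT]
  have h1 : ∀ p : ℝ × ℝ, gaussianPDF 0 1 p.1 * gaussianPDF 0 1 p.2 =
      ENNReal.ofReal (gaussianPDFReal 0 1 p.1 * gaussianPDFReal 0 1 p.2) := fun p => by
    rw [gaussianPDF, gaussianPDF, ENNReal.ofReal_mul (gaussianPDFReal_nonneg _ _ _)]
  simp_rw [h1]
  rw [← ofReal_integral_eq_lintegral_ofReal]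
  · have : Integrable (fun p : ℝ × ℝ => gaussianPDFReal 0 1 p.1 * gaussianPDFReal 0 1 p.2)
        (volume : Measure (ℝ × ℝ)) := by
      rw [Measure.volume_eq_prod]
      exact (integrable_gaussianPDFReal 0 1).mul_prod (integrable_gaussianPDFReal 0 1)
    exact this.restrict
  · exact ae_of_all _ fun p => mul_nonneg (gaussianPDFReal_nonneg _ _ _)
      (gaussianPDFReal_nonneg _ _ _)

lemma gpdf_mul (x y : ℝ) : gaussianPDFReal 0 1 x * gaussianPDFReal 0 1 y =
    (2 * π)⁻¹ * rexp (-(x ^ 2 + y ^ 2) / 2) := by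
  simp only [gaussianPDFReal, NNReal.coe_one, mul_one, sub_zero]
  rw [show ((Real.sqrt (2 * π))⁻¹ * rexp (-x ^ 2 / 2)) *
      ((Real.sqrt (2 * π))⁻¹ * rexp (-y ^ 2 / 2)) =
      ((Real.sqrt (2 * π)) * (Real.sqrt (2 * π)))⁻¹ *
        (rexp (-x ^ 2 / 2) * rexp (-y ^ 2 / 2)) by ring]
  rw [Real.mul_self_sqrt (by positivity), ← Real.exp_add]
  congr 1
  ring

lemma wedge_measure {s : ℝ} (hs : 1 < s) :
    (((gaussianReal 0 1).prod (gaussianReal 0 1))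
      {p : ℝ × ℝ | 0 < p.1 - p.2 / s ∧ 0 < p.2 - p.1 / s}).toReal =
      (2 * π)⁻¹ * (π / 2 - 2 * arctan s⁻¹) := by
  have hs0 : 0 < s := lt_trans one_pos hs
  set T : Set (ℝ × ℝ) := {p : ℝ × ℝ | 0 < p.1 - p.2 / s ∧ 0 < p.2 - p.1 / s} with hTdef
  have hT : MeasurableSet T :=
    (measurableSet_lt measurable_const (measurable_fst.sub (measurable_snd.div_const s))).inter
      (measurableSet_lt measurable_const (measurable_snd.sub (measurable_fst.div_const s)))
  rw [gauss_prod_apply hT, ENNReal.toReal_ofReal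
    (setIntegral_nonneg hT fun p _ => mul_nonneg (gaussianPDFReal_nonneg _ _ _)
      (gaussianPDFReal_nonneg _ _ _))]
  rw [← integral_indicator hT]
  rw [← integral_comp_polarCoord_symm
    (fun p => T.indicator (fun q => gaussianPDFReal 0 1 q.1 * gaussianPDFReal 0 1 q.2) p)]
  have htarget : polarCoord.target = Ioi (0:ℝ) ×ˢ Ioo (-π) π := rfl
  rw [htarget]
  rw [setIntegral_congr_fun (measurableSet_Ioi.prod measurableSet_Ioo)
    (g := fun p : ℝ × ℝ => (p.1 * rexp (-p.1 ^ 2 / 2)) *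
      ((Ioo (arctan s⁻¹) (arctan s)).indicator (fun _ => (2 * π)⁻¹) p.2)) ?_]
  · rw [Measure.volume_eq_prod, setIntegral_prod_mul (f := fun a : ℝ => a * rexp (-a ^ 2 / 2))
      (g := fun b : ℝ => (Ioo (arctan s⁻¹) (arctan s)).indicator (fun _ => (2 * π)⁻¹) b),
      radial_integral, one_mul,
      setIntegral_indicator measurableSet_Ioo]
    have hsub : Ioo (-π) π ∩ Ioo (arctan s⁻¹) (arctan s) = Ioo (arctan s⁻¹) (arctan s) := by
      apply inter_eq_self_of_subset_right
      intro x hx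
      have h1 : 0 < arctan s⁻¹ := by
        rw [← Real.arctan_zero]; exact Real.arctan_strictMono (by positivity)
      exact ⟨by linarith [hx.1, Real.pi_pos], lt_trans hx.2 (lt_trans (Real.arctan_lt_pi_div_two s)
        (by linarith [Real.pi_pos]))⟩
    rw [hsub, setIntegral_const, measureReal_def, Real.volume_Ioo, ENNReal.toReal_ofReal, smul_eq_mul]
    · rw [Real.arctan_inv_of_pos hs0]
      ring
    · rw [Real.arctan_inv_of_pos hs0]
      have h2 : π / 4 < arctan s := by
        rw [← Real.arctan_one]; exact Real.arctan_strictMono hs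
      linarith
  · rintro ⟨r, φ⟩ hp
    obtain ⟨hr, hφ⟩ := mem_prod.mp hp
    simp only [mem_Ioi] at hr
    have hsymm : polarCoord.symm (r, φ) = (r * cos φ, r * sin φ) := rfl
    dsimp only
    by_cases hmem : φ ∈ Ioo (arctan s⁻¹) (arctan s)
    · have hmemT : (r * cos φ, r * sin φ) ∈ T := by
        rw [hTdef]
        exact (wedge_iff hs hφ hr).mpr hmem
      rw [hsymm]
      rw [Set.indicator_of_mem hmemT, Set.indicator_of_mem hmem]
      rw [gpdf_mul]
      have hsq : (r * cos φ) ^ 2 + (r * sin φ) ^ 2 = r ^ 2 := by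
        have := Real.sin_sq_add_cos_sq φ
        nlinarith
      rw [hsq, smul_eq_mul]
      ring
    · have hmemT : (r * cos φ, r * sin φ) ∉ T := by
        rw [hTdef]
        intro hc
        exact hmem ((wedge_iff hs hφ hr).mp hc)
      rw [hsymm, Set.indicator_of_notMem hmemT, Set.indicator_of_notMem hmem,
        smul_zero, mul_zero]

theorem sign_prob_eq {Ω : Type*} [MeasurableSpace Ω] (μ : Measure Ω) [IsProbabilityMeasure μ]
    (P Q : Ω → ℝ) (hPm : Measurable P) (hQm : Measurable Q)
    (hP : μ.map P = gaussianReal 0 1) (hQ : μ.map Q = gaussianReal 0 1)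
    (hind : IndepFun P Q μ) (D : ℝ) (hD : 2 < D) :
    (μ {ω | Real.sign (P ω - Q ω / Real.sqrt (D - 1)) =
        Real.sign (Q ω - P ω / Real.sqrt (D - 1))}).toReal =
      (1 / π) * (π / 2 - 2 * Real.arctan (1 / Real.sqrt (D - 1))) := by
  set s : ℝ := Real.sqrt (D - 1) with hsdef
  have hs : 1 < s := by
    nlinarith [Real.sq_sqrt (by linarith : (0:ℝ) ≤ D - 1), Real.sqrt_nonneg (D - 1)]
  have hs0 : 0 < s := lt_trans one_pos hs
  set ν := (gaussianReal 0 1).prod (gaussianReal 0 1) with hνdef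
  set Tp : Set (ℝ × ℝ) := {p | 0 < p.1 - p.2 / s ∧ 0 < p.2 - p.1 / s} with hTpdef
  set Tm : Set (ℝ × ℝ) := {p | p.1 - p.2 / s < 0 ∧ p.2 - p.1 / s < 0} with hTmdef
  set T0 : Set (ℝ × ℝ) := {p | p.1 - p.2 / s = 0 ∧ p.2 - p.1 / s = 0} with hT0def
  have hf1 : Measurable (fun p : ℝ × ℝ => p.1 - p.2 / s) :=
    measurable_fst.sub (measurable_snd.div_const s)
  have hf2 : Measurable (fun p : ℝ × ℝ => p.2 - p.1 / s) :=
    measurable_snd.sub (measurable_fst.div_const s)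
  have hTp : MeasurableSet Tp :=
    (measurableSet_lt measurable_const hf1).inter (measurableSet_lt measurable_const hf2)
  have hTm : MeasurableSet Tm :=
    (measurableSet_lt hf1 measurable_const).inter (measurableSet_lt hf2 measurable_const)
  have hT0 : MeasurableSet T0 :=
    (measurableSet_eq_fun hf1 measurable_const).inter (measurableSet_eq_fun hf2 measurable_const)
  have hset : {ω | Real.sign (P ω - Q ω / s) = Real.sign (Q ω - P ω / s)} =
      (fun ω => (P ω, Q ω)) ⁻¹' (Tp ∪ Tm ∪ T0) := by
    ext ω
    simp only [mem_setOf_eq, mem_preimage, mem_union, hTpdef, hTmdef, hT0def]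
    rw [sign_eq_sign_iff]
    constructor
    · rintro (⟨h1, h2⟩ | ⟨h1, h2⟩ | ⟨h1, h2⟩)
      · exact Or.inl (Or.inl ⟨h1, h2⟩)
      · exact Or.inl (Or.inr ⟨h1, h2⟩)
      · exact Or.inr ⟨h1, h2⟩
    · rintro ((⟨h1, h2⟩ | ⟨h1, h2⟩) | ⟨h1, h2⟩)
      · exact Or.inl ⟨h1, h2⟩
      · exact Or.inr (Or.inl ⟨h1, h2⟩)
      · exact Or.inr (Or.inr ⟨h1, h2⟩)
  have hmap : μ.map (fun ω => (P ω, Q ω)) = ν := by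
    rw [(indepFun_iff_map_prod_eq_prod_map_map hPm.aemeasurable hQm.aemeasurable).mp hind,
      hP, hQ]
  have hμE : μ {ω | Real.sign (P ω - Q ω / s) = Real.sign (Q ω - P ω / s)} =
      ν (Tp ∪ Tm ∪ T0) := by
    rw [hset, ← hmap, Measure.map_apply (hPm.prodMk hQm) ((hTp.union hTm).union hT0)]
  have hT0null : ν T0 = 0 := by
    have hline : MeasurableSet {p : ℝ × ℝ | p.1 - p.2 / s = 0} :=
      measurableSet_eq_fun hf1 measurable_const
    have hsub : T0 ⊆ {p : ℝ × ℝ | p.1 - p.2 / s = 0} := fun p hp => hp.1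
    refine measure_mono_null hsub ?_
    rw [hνdef, Measure.prod_apply hline]
    have hslice : ∀ x : ℝ, (Prod.mk x ⁻¹' {p : ℝ × ℝ | p.1 - p.2 / s = 0}) = {s * x} := by
      intro x
      ext y
      simp only [mem_preimage, mem_setOf_eq, mem_singleton_iff]
      constructor
      · intro h
        field_simp at h
        linarith
      · intro h
        rw [h]
        field_simp
        ring
    simp_rw [hslice]
    have hone : ∀ x : ℝ, (gaussianReal 0 1) {s * x} = 0 := fun x =>
      (gaussianReal_absolutelyContinuous 0 one_ne_zero) (measure_singleton _)
    simp [hone]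
  have hTmTp : ν Tm = ν Tp := by
    have hmapneg : (gaussianReal 0 1).map (fun x : ℝ => -x) = gaussianReal 0 1 := by
      have h := gaussianReal_map_const_mul (μ := 0) (v := 1) (-1)
      have e : (⟨(-1:ℝ) ^ 2, sq_nonneg _⟩ : NNReal) * 1 = 1 := by
        ext
        norm_num
      simp only [neg_one_mul, mul_zero, e] at h
      convert h using 2
      exact e.symm
    have hν : ν.map (Prod.map (fun x : ℝ => -x) (fun x : ℝ => -x)) = ν := by
      rw [hνdef, ← Measure.map_prod_map _ _ measurable_neg measurable_neg, hmapneg]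
    have hpre : (Prod.map (fun x : ℝ => -x) (fun x : ℝ => -x)) ⁻¹' Tm = Tp := by
      ext ⟨a, b⟩
      simp only [mem_preimage, Prod.map_apply', hTmdef, hTpdef, mem_setOf_eq, neg_div]
      constructor <;> rintro ⟨h1, h2⟩ <;> exact ⟨by linarith, by linarith⟩
    conv_lhs => rw [← hν]
    rw [Measure.map_apply (measurable_neg.prodMap measurable_neg) hTm, hpre]
  have hdisj : Disjoint Tp Tm := by
    rw [Set.disjoint_left]
    rintro p ⟨h1, _⟩ ⟨h2, _⟩
    linarith
  have hunion : ν (Tp ∪ Tm ∪ T0) = ν Tp + ν Tp := by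
    have h1 : ν (Tp ∪ Tm ∪ T0) = ν (Tp ∪ Tm) := by
      apply le_antisymm
      · calc ν (Tp ∪ Tm ∪ T0) ≤ ν (Tp ∪ Tm) + ν T0 := measure_union_le _ _
          _ = ν (Tp ∪ Tm) := by rw [hT0null, add_zero]
      · exact measure_mono subset_union_left
    rw [h1, measure_union hdisj hTm, hTmTp]
  rw [hμE, hunion]
  have hfin : ν Tp ≠ ⊤ := measure_ne_top _ _
  rw [ENNReal.toReal_add hfin hfin]
  have hw := wedge_measure hs
  rw [← hνdef] at hw
  rw [hw]
  rw [one_div, one_div]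
  have hπ := Real.pi_pos
  field_simp
  ring
end

section
/- For D ≥ 2, the identity 1/2 + (2/π)·arctan(1/√(D-1)) = arccos(-2√(D-1)/D)/π holds. -/
open Real

theorem arctan_arccos_identity (D : ℝ) (hD : 2 ≤ D) :
    1 / 2 + (2 / π) * Real.arctan (1 / Real.sqrt (D - 1)) =
      Real.arccos (-2 * Real.sqrt (D - 1) / D) / π := by
  have hD0 : (0:ℝ) < D := by linarith
  set s := Real.sqrt (D - 1) with hsdef
  have hs1 : (1:ℝ) ≤ s := by
    rw [show (1:ℝ) = Real.sqrt 1 by simp]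
    exact Real.sqrt_le_sqrt (by linarith)
  have hs0 : 0 < s := by linarith
  have hs2 : s ^ 2 = D - 1 := Real.sq_sqrt (by linarith)
  set t := Real.arctan (1 / s) with htdef
  have ht0 : 0 ≤ t := by
    rw [show (0:ℝ) = Real.arctan 0 by simp]
    exact Real.arctan_strictMono.monotone (by positivity)
  have ht4 : t ≤ π / 4 := by
    rw [show π / 4 = Real.arctan 1 from (Real.arctan_one).symm]
    exact Real.arctan_strictMono.monotone (by rw [div_le_one hs0]; exact hs1)
  have key : Real.cos (π / 2 + 2 * t) = -2 * s / D := by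
    rw [Real.cos_add, Real.cos_pi_div_two, Real.sin_pi_div_two, Real.sin_two_mul, htdef,
      Real.sin_arctan, Real.cos_arctan]
    have h1 : (0:ℝ) < 1 + (1 / s) ^ 2 := by positivity
    have hsq : Real.sqrt (1 + (1 / s) ^ 2) ^ 2 = 1 + (1 / s) ^ 2 :=
      Real.sq_sqrt h1.le
    have hsqpos : 0 < Real.sqrt (1 + (1 / s) ^ 2) := Real.sqrt_pos.mpr h1
    field_simp
    rw [Real.sq_sqrt (by positivity : (0:ℝ) ≤ (s ^ 2 + 1) / s ^ 2)]
    field_simp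
    nlinarith [hsq, hs2, hsqpos, hs0, hD0]
  have harc : Real.arccos (-2 * s / D) = π / 2 + 2 * t := by
    rw [← key, Real.arccos_cos]
    · have := Real.pi_pos; linarith
    · have := Real.pi_pos; linarith
  rw [harc]
  have hpi : π ≠ 0 := Real.pi_ne_zero
  field_simp
end
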